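/- Let ψ(x) = H(x,1-x) + r·log(1 - (1 - x^k - (1-x)^k)/(2^{k-1} - 1)) with r = (log 2/2)·2^k - (1+log 2)/2 + η, η = O_k(1). Then ψ(2^{-k}) = 2^{-k} + O(k²·2^{-2k}) as k → ∞; in particular, for sufficiently large k, ψ(2^{-k}) > f(d,k) = log 2 + r·log(1-2^{1-k}) when η is bounded below by a positive constant. -/

import Mathlib

open Real Filter

set_option maxHeartbeats 1000000

private lemma aux_taylor1 (t : ℝ) (h0 : 0 ≤ t) (hs : t ≤ 1/2) :
    |Real.log (1 - t) + t| ≤ 2 * t ^ 2 := by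
  have h1 : |t| < 1 := by rw [abs_of_nonneg h0]; linarith
  have h2 := Real.abs_log_sub_add_sum_range_le h1 1
  rw [abs_of_nonneg h0] at h2
  norm_num [Finset.sum_range_one] at h2
  calc |Real.log (1 - t) + t| = |t + Real.log (1 - t)| := by rw [add_comm]
    _ ≤ t ^ 2 / (1 - t) := h2
    _ ≤ 2 * t ^ 2 := by
        rw [div_le_iff₀ (by linarith)]
        nlinarith [sq_nonneg t]

private lemma aux_taylor2 (t : ℝ) (h0 : 0 ≤ t) (hs : t ≤ 1/2) :
    |Real.log (1 - t) + t + t ^ 2 / 2| ≤ 2 * t ^ 3 := by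
  have h1 : |t| < 1 := by rw [abs_of_nonneg h0]; linarith
  have h2 := Real.abs_log_sub_add_sum_range_le h1 2
  rw [abs_of_nonneg h0] at h2
  have hsum : ∑ i ∈ Finset.range 2, t ^ (i + 1) / ((i : ℝ) + 1) = t + t ^ 2 / 2 := by
    norm_num [Finset.sum_range_succ]
  rw [hsum] at h2
  have h3 : (0:ℝ) ≤ t ^ 3 := by positivity
  calc |Real.log (1 - t) + t + t ^ 2 / 2| = |t + t ^ 2 / 2 + Real.log (1 - t)| := by ring_nf
    _ ≤ t ^ 3 / (1 - t) := h2
    _ ≤ 2 * t ^ 3 := by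
        rw [div_le_iff₀ (by linarith)]
        nlinarith

private lemma aux_ent (x d : ℝ) (hx0 : 0 < x) (hxs : x ≤ 1/2) (h : |x + d| ≤ 2 * x ^ 2) :
    |(-(1 - x) * d) - x| ≤ 4 * x ^ 2 := by
  obtain ⟨h1, h2⟩ := abs_le.mp h
  rw [abs_le]
  constructor <;>
    nlinarith [mul_le_mul_of_nonneg_left h2 hx0.le, mul_le_mul_of_nonneg_left h1 hx0.le]

private lemma aux_pow_lb (k : ℕ) (x : ℝ) (hx0 : 0 < x) (hx1 : x ≤ 1/2) :
    1 - (k : ℝ) * x ≤ (1 - x) ^ k := by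
  have h := one_add_mul_le_pow (a := -x) (by linarith) k
  calc 1 - (k : ℝ) * x = 1 + (k : ℝ) * (-x) := by ring
    _ ≤ (1 + -x) ^ k := h
    _ = (1 - x) ^ k := by ring_nf

private lemma aux_pow_ub (k : ℕ) (x : ℝ) (hx0 : 0 < x) (hx1 : x ≤ 1/2)
    (hkx : (k : ℝ) * x ≤ 1) :
    (1 - x) ^ k ≤ 1 - (k : ℝ) * x + (k : ℝ) ^ 2 * x ^ 2 := by
  have hp0 : (0:ℝ) ≤ (1 - x) ^ k := pow_nonneg (by linarith) _
  have hq1 : 1 + (k : ℝ) * x ≤ (1 + x) ^ k := by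
    have := one_add_mul_le_pow (a := x) (by linarith) k
    linarith
  have hpq : (1 - x) ^ k * (1 + x) ^ k ≤ 1 := by
    rw [← mul_pow]
    exact pow_le_one₀ (by nlinarith) (by nlinarith)
  have hpA : (1 - x) ^ k * (1 + (k : ℝ) * x) ≤ 1 :=
    le_trans (mul_le_mul_of_nonneg_left hq1 hp0) hpq
  have hp1 := aux_pow_lb k x hx0 hx1
  nlinarith [mul_le_mul_of_nonneg_right hp1 (mul_nonneg (Nat.cast_nonneg k) hx0.le)]

private lemma aux_u (kR x N D u : ℝ) (hx0 : 0 < x) (hxs : x ≤ 1/1024) (hk1 : 1 ≤ kR)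
    (hN0 : 0 ≤ N) (hN1 : N ≤ kR * x) (hN2 : kR * x - kR ^ 2 * x ^ 2 - x ^ 2 ≤ N)
    (hkx : kR * x ≤ 1) (hD0 : 0 < D) (hDx : D * (2 * x) = 1 - 2 * x) (hu : u = N / D) :
    0 ≤ u ∧ u ≤ 3 * x ∧ u ≤ 3 * kR * x ^ 2 ∧
      u - 2 * kR * x ^ 2 ≤ 8 * kR ^ 2 * x ^ 3 ∧ 2 * kR * x ^ 2 - u ≤ 8 * kR ^ 2 * x ^ 3 := by
  have hu0 : 0 ≤ u := hu ▸ div_nonneg hN0 hD0.le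
  have hkey : u * (1 - 2 * x) = N * (2 * x) := by
    rw [← hDx, hu]
    field_simp
  have h2x : (0:ℝ) < 1 - 2 * x := by linarith
  have hkRx3 : (0:ℝ) ≤ kR * x ^ 3 := by positivity
  have hub : u ≤ 2 * kR * x ^ 2 + 8 * kR * x ^ 3 := by
    nlinarith [hkey, mul_le_mul_of_nonneg_right hN1 (by linarith : (0:ℝ) ≤ 2 * x), h2x,
      mul_nonneg hkRx3 hx0.le]
  have hlb : 2 * kR * x ^ 2 - 4 * kR ^ 2 * x ^ 3 ≤ u := by
    nlinarith [hkey, mul_le_mul_of_nonneg_right hN2 (by linarith : (0:ℝ) ≤ 2 * x),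
      mul_nonneg hu0 hx0.le, mul_nonneg (mul_nonneg (by nlinarith : (0:ℝ) ≤ kR ^ 2) hx0.le)
        (mul_nonneg hx0.le hx0.le)]
  have hkk : (0:ℝ) ≤ (kR - 1) * kR * x ^ 3 :=
    mul_nonneg (mul_nonneg (by linarith) (by linarith)) (by positivity)
  have hkx3 : (0:ℝ) ≤ kR ^ 2 * x ^ 3 := by nlinarith
  refine ⟨hu0, by nlinarith, by nlinarith, by nlinarith, by nlinarith⟩

private lemma aux_v (P u kR x : ℝ) (hP0 : 0 ≤ P) (hPx : P * x = 1)
    (h1 : u - 2 * kR * x ^ 2 ≤ 8 * kR ^ 2 * x ^ 3) (h2 : 2 * kR * x ^ 2 - u ≤ 8 * kR ^ 2 * x ^ 3) :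
    |P * u - 2 * kR * x| ≤ 8 * kR ^ 2 * x ^ 2 := by
  have e1 : P * (2 * kR * x ^ 2) = 2 * kR * x := by linear_combination (2 * kR * x) * hPx
  have e2 : P * (8 * kR ^ 2 * x ^ 3) = 8 * kR ^ 2 * x ^ 2 := by
    linear_combination (8 * kR ^ 2 * x ^ 2) * hPx
  rw [abs_le]
  constructor <;>
    nlinarith [mul_le_mul_of_nonneg_left h1 hP0, mul_le_mul_of_nonneg_left h2 hP0]

private lemma aux_r (L2 P η B : ℝ) (hL2l : 0.6 < L2) (hL2u : L2 < 0.7) (hP : 0 < P)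
    (hBk : (B + 2) * 10 ≤ P) (hη0 : 0 ≤ η) (hηB : η ≤ B) :
    |L2 / 2 * P - (1 + L2) / 2 + η| ≤ P / 2 := by
  rw [abs_le]
  constructor <;> nlinarith

private lemma aux_usq (kR x u : ℝ) (hu0 : 0 ≤ u) (hu4 : u ≤ 3 * kR * x ^ 2) :
    2 * u ^ 2 ≤ 18 * kR ^ 2 * x ^ 4 := by
  nlinarith [mul_le_mul hu4 hu4 hu0 (le_trans hu0 hu4)]

private lemma aux_g (x η η₀ L2 R : ℝ) (hx0 : 0 < x) (hL2u : L2 < 0.7) (hL2l : 0.6 < L2)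
    (hη : η₀ ≤ η) (hη0 : 0 ≤ η) (hR : |R| ≤ 8 * x ^ 2) :
    (1 + L2) * x ^ 2 + (1 - 2 * η) * x - 2 * η * x ^ 2 + R ≤ x - 2 * η₀ * x + 10 * x ^ 2 := by
  have h1 := (abs_le.mp hR).2
  nlinarith [mul_le_mul_of_nonneg_right hη hx0.le, mul_nonneg hη0 (sq_nonneg x)]

private lemma aux_final (K B x η₀ G Ψ : ℝ) (hx0 : 0 < x) (hB : 0 ≤ B)
    (hG : G ≤ x - 2 * η₀ * x + 10 * x ^ 2)
    (hΨ : x - (11 + 3 * B) * K * x ^ 2 ≤ Ψ)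
    (hfin : ((11 + 3 * B) * K + (10 + 3 * B)) * x < 2 * η₀) : G < Ψ := by
  nlinarith [mul_lt_mul_of_pos_right hfin hx0, mul_nonneg hB (sq_nonneg x)]

private theorem core (B η₀ η kR P x D NN : ℝ)
    (hB : 0 < B) (hη₀ : 0 < η₀) (hη0 : 0 ≤ η) (hηB : η ≤ B)
    (hk1 : 1 ≤ kR) (hx0 : 0 < x) (hxs : x ≤ 1/1024)
    (hP : 0 < P) (hPx : P * x = 1) (hBk : (B + 2) * 10 ≤ P) (hkx : kR * x ≤ 1)
    (hfin : (11 + 3 * B) * kR ^ 2 + (10 + 3 * B) < 2 * η₀ * P)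
    (hlogx : Real.log x = -(kR * Real.log 2))
    (hN0 : 0 ≤ NN) (hN1 : NN ≤ kR * x) (hN2 : kR * x - kR ^ 2 * x ^ 2 - x ^ 2 ≤ NN)
    (hD0 : 0 < D) (hDx : D * (2 * x) = 1 - 2 * x) :
    |(-x * Real.log x - (1 - x) * Real.log (1 - x)
        + (Real.log 2 / 2 * P - (1 + Real.log 2) / 2 + η) * Real.log (1 - NN / D)) - x|
      ≤ (11 + 3 * B) * kR ^ 2 * x ^ 2 ∧
      (η₀ ≤ η → Real.log 2 + (Real.log 2 / 2 * P - (1 + Real.log 2) / 2 + η) *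
          Real.log (1 - 2 * x) <
        -x * Real.log x - (1 - x) * Real.log (1 - x)
        + (Real.log 2 / 2 * P - (1 + Real.log 2) / 2 + η) * Real.log (1 - NN / D)) := by
  have hL2u : Real.log 2 < 0.7 := lt_trans Real.log_two_lt_d9 (by norm_num)
  have hL2l : (0.6 : ℝ) < Real.log 2 := lt_trans (by norm_num) Real.log_two_gt_d9
  set L2 : ℝ := Real.log 2 with hL2def
  set r : ℝ := L2 / 2 * P - (1 + L2) / 2 + η with hrdef
  set u : ℝ := NN / D with hudef
  obtain ⟨hu0, hu3, hu4, hud, hud'⟩ :=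
    aux_u kR x NN D u hx0 hxs hk1 hN0 hN1 hN2 hkx hD0 hDx hudef
  have hv := aux_v P u kR x hP.le hPx hud hud'
  have hr_abs : |r| ≤ P / 2 := aux_r L2 P η B hL2l hL2u hP hBk hη0 hηB
  -- Taylor bound for log(1-u)
  have hδ2 : |Real.log (1 - u) + u| ≤ 18 * kR ^ 2 * x ^ 4 := by
    have h1 := aux_taylor1 u hu0 (by linarith)
    have h2 := aux_usq kR x u hu0 hu4
    linarith
  -- term bounds
  have hkR2x2 : (0:ℝ) ≤ kR ^ 2 * x ^ 2 := by positivity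
  have hterm1 : |L2 / 2 * (P * u - 2 * kR * x)| ≤ 3 * kR ^ 2 * x ^ 2 := by
    rw [abs_mul]
    have h1 : |L2 / 2| ≤ 0.35 := by rw [abs_of_pos (by linarith)]; linarith
    calc |L2 / 2| * |P * u - 2 * kR * x| ≤ 0.35 * (8 * kR ^ 2 * x ^ 2) :=
          mul_le_mul h1 hv (abs_nonneg _) (by norm_num)
      _ ≤ 3 * kR ^ 2 * x ^ 2 := by linarith
  have hterm2 : |((1 + L2) / 2 - η) * u| ≤ (1 + B) * (3 * kR * x ^ 2) := by
    rw [abs_mul]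
    have h1 : |(1 + L2) / 2 - η| ≤ 1 + B := by
      rw [abs_le]; constructor <;> linarith
    have h2 : |u| ≤ 3 * kR * x ^ 2 := by rw [abs_of_nonneg hu0]; exact hu4
    exact mul_le_mul h1 h2 (abs_nonneg _) (by linarith)
  have hx3nn : (0:ℝ) ≤ kR ^ 2 * x ^ 3 := by positivity
  have hterm3 : |r * (Real.log (1 - u) + u)| ≤ kR ^ 2 * x ^ 2 := by
    rw [abs_mul]
    have hstep : |r| * |Real.log (1 - u) + u| ≤ (P / 2) * (18 * kR ^ 2 * x ^ 4) :=
      mul_le_mul hr_abs hδ2 (abs_nonneg _) (by linarith)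
    have heq : (P / 2) * (18 * kR ^ 2 * x ^ 4) = 9 * kR ^ 2 * x ^ 3 * (P * x) := by ring
    have heq2 : (P / 2) * (18 * kR ^ 2 * x ^ 4) = 9 * kR ^ 2 * x ^ 3 := by rw [heq, hPx]; ring
    have hlast : 9 * kR ^ 2 * x ^ 3 ≤ kR ^ 2 * x ^ 2 := by
      nlinarith [mul_nonneg (sq_nonneg kR) (mul_nonneg (sq_nonneg x) (by linarith : (0:ℝ) ≤ 1 - 9 * x))]
    linarith [heq2 ▸ hstep]
  have hexp : r * Real.log (1 - u) + kR * L2 * x =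
      -(L2 / 2 * (P * u - 2 * kR * x)) + ((1 + L2) / 2 - η) * u
        + r * (Real.log (1 - u) + u) := by
    rw [hrdef]; ring
  have hT : |r * Real.log (1 - u) + kR * L2 * x|
      ≤ 4 * kR ^ 2 * x ^ 2 + (1 + B) * (3 * kR * x ^ 2) := by
    rw [hexp]
    have t1 := abs_add_le (-(L2 / 2 * (P * u - 2 * kR * x)) + ((1 + L2) / 2 - η) * u)
      (r * (Real.log (1 - u) + u))
    have t2 := abs_add_le (-(L2 / 2 * (P * u - 2 * kR * x))) (((1 + L2) / 2 - η) * u)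
    rw [abs_neg] at t2
    linarith
  -- entropy term
  have hd2 := aux_taylor1 x hx0.le (by linarith)
  have hBterm : |(-(1 - x) * Real.log (1 - x)) - x| ≤ 4 * x ^ 2 := by
    apply aux_ent x (Real.log (1 - x)) hx0 (by linarith)
    have : |x + Real.log (1 - x)| = |Real.log (1 - x) + x| := by rw [add_comm]
    rw [this]; exact hd2
  have hA : -x * Real.log x = kR * L2 * x := by rw [hlogx, hL2def]; ring
  have hmain : |(-x * Real.log x - (1 - x) * Real.log (1 - x) + r * Real.log (1 - u)) - x|
      ≤ (11 + 3 * B) * kR ^ 2 * x ^ 2 := by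
    have hrw : (-x * Real.log x - (1 - x) * Real.log (1 - x) + r * Real.log (1 - u)) - x
        = ((-(1 - x) * Real.log (1 - x)) - x)
          + (r * Real.log (1 - u) + kR * L2 * x) := by rw [hA]; ring
    rw [hrw]
    have t1 := abs_add_le ((-(1 - x) * Real.log (1 - x)) - x)
      (r * Real.log (1 - u) + kR * L2 * x)
    have e1 : (0:ℝ) ≤ (kR ^ 2 - 1) * x ^ 2 :=
      mul_nonneg (by nlinarith) (sq_nonneg x)
    have e2 : (0:ℝ) ≤ (1 + B) * ((kR ^ 2 - kR) * x ^ 2) :=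
      mul_nonneg (by linarith) (mul_nonneg (by nlinarith) (sq_nonneg x))
    have e3 : (0:ℝ) ≤ B * (kR ^ 2 * x ^ 2) := mul_nonneg hB.le hkR2x2
    nlinarith [t1, hBterm, hT]
  refine ⟨hmain, ?_⟩
  intro hη₀η
  -- second part
  have hδ3 : |Real.log (1 - 2 * x) + 2 * x + 2 * x ^ 2| ≤ 16 * x ^ 3 := by
    have h := aux_taylor2 (2 * x) (by linarith) (by linarith)
    have e : (2 * x) ^ 2 / 2 = 2 * x ^ 2 := by ring
    rw [e] at h
    calc |Real.log (1 - 2 * x) + 2 * x + 2 * x ^ 2| ≤ 2 * (2 * x) ^ 3 := h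
      _ = 16 * x ^ 3 := by ring
  have hterm4 : |r * (Real.log (1 - 2 * x) + 2 * x + 2 * x ^ 2)| ≤ 8 * x ^ 2 := by
    rw [abs_mul]
    have hstep : |r| * |Real.log (1 - 2 * x) + 2 * x + 2 * x ^ 2| ≤ (P / 2) * (16 * x ^ 3) :=
      mul_le_mul hr_abs hδ3 (abs_nonneg _) (by linarith)
    have heq2 : (P / 2) * (16 * x ^ 3) = 8 * x ^ 2 := by
      have : (P / 2) * (16 * x ^ 3) = 8 * x ^ 2 * (P * x) := by ring
      rw [this, hPx]; ring
    linarith [heq2 ▸ hstep]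
  have hgexp : Real.log 2 + r * Real.log (1 - 2 * x)
      = (1 + L2) * x ^ 2 + (1 - 2 * η) * x - 2 * η * x ^ 2
        + r * (Real.log (1 - 2 * x) + 2 * x + 2 * x ^ 2) := by
    rw [hrdef, hL2def]
    linear_combination (-(Real.log 2) * (1 + x)) * hPx
  have hg_ub : Real.log 2 + r * Real.log (1 - 2 * x) ≤ x - 2 * η₀ * x + 10 * x ^ 2 := by
    rw [hgexp]
    exact aux_g x η η₀ L2 _ hx0 hL2u hL2l hη₀η hη0 hterm4
  have hψ_lb : x - (11 + 3 * B) * kR ^ 2 * x ^ 2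
      ≤ -x * Real.log x - (1 - x) * Real.log (1 - x) + r * Real.log (1 - u) := by
    have := (abs_le.mp hmain).1
    linarith
  have hfinal : ((11 + 3 * B) * kR ^ 2 + (10 + 3 * B)) * x < 2 * η₀ := by
    have h := mul_lt_mul_of_pos_right hfin hx0
    calc ((11 + 3 * B) * kR ^ 2 + (10 + 3 * B)) * x < (2 * η₀ * P) * x := h
      _ = 2 * η₀ * (P * x) := by ring
      _ = 2 * η₀ := by rw [hPx]; ring
  exact aux_final (kR ^ 2) B x η₀ _ _ hx0 hB.le hg_ub hψ_lb hfinal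

private theorem stmt12_helper (B η₀ : ℝ) (hB : 0 < B) (hη₀ : 0 < η₀) (k : ℕ) (hk10 : 10 ≤ k)
    (hBk : (B + 2) * 10 ≤ 2 ^ k)
    (hfin : (11 + 3 * B) * (k : ℝ) ^ 2 + (10 + 3 * B) < 2 * η₀ * 2 ^ k)
    (η : ℝ) (hη0 : 0 ≤ η) (hηB : η ≤ B) :
    |(-(1 / 2 ^ k : ℝ)) * Real.log (1 / 2 ^ k)
        - (1 - 1 / 2 ^ k) * Real.log (1 - 1 / 2 ^ k)
        + (Real.log 2 / 2 * 2 ^ k - (1 + Real.log 2) / 2 + η) *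
          Real.log (1 - (1 - (1 / 2 ^ k : ℝ) ^ k - (1 - 1 / 2 ^ k) ^ k) / (2 ^ (k - 1) - 1))
        - 1 / 2 ^ k| ≤ (11 + 3 * B) * (k : ℝ) ^ 2 / 4 ^ k ∧
      (η₀ ≤ η → Real.log 2 + (Real.log 2 / 2 * 2 ^ k - (1 + Real.log 2) / 2 + η) *
          Real.log (1 - 2 / 2 ^ k) <
        -(1 / 2 ^ k : ℝ) * Real.log (1 / 2 ^ k)
        - (1 - 1 / 2 ^ k) * Real.log (1 - 1 / 2 ^ k)
        + (Real.log 2 / 2 * 2 ^ k - (1 + Real.log 2) / 2 + η) *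
          Real.log (1 - (1 - (1 / 2 ^ k : ℝ) ^ k - (1 - 1 / 2 ^ k) ^ k) / (2 ^ (k - 1) - 1))) := by
  have hk1 : (1 : ℝ) ≤ (k : ℝ) := by exact_mod_cast Nat.one_le_iff_ne_zero.mpr (by omega)
  have hP : (0 : ℝ) < 2 ^ k := by positivity
  have hx0 : (0 : ℝ) < 1 / 2 ^ k := by positivity
  have hPx : (2 : ℝ) ^ k * (1 / 2 ^ k) = 1 := by field_simp
  have hxsmall : (1 : ℝ) / 2 ^ k ≤ 1 / 1024 := by
    rw [div_le_div_iff₀ (by positivity) (by norm_num)]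
    calc (1 : ℝ) * 1024 = 2 ^ 10 := by norm_num
      _ ≤ 2 ^ k := pow_le_pow_right₀ (by norm_num) hk10
      _ = 1 * 2 ^ k := by ring
  have hkP : (k : ℝ) ≤ 2 ^ k := by exact_mod_cast (Nat.lt_two_pow_self (n := k)).le
  have hkx : (k : ℝ) * (1 / 2 ^ k) ≤ 1 := by
    rw [mul_one_div, div_le_one hP]; exact hkP
  have hlogx : Real.log ((1 : ℝ) / 2 ^ k) = -((k : ℝ) * Real.log 2) := by
    rw [one_div, Real.log_inv, Real.log_pow]
  -- N bounds
  set x : ℝ := 1 / 2 ^ k with hxdef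
  have hxhalf : x ≤ 1 / 2 := by linarith
  have hplb := aux_pow_lb k x hx0 hxhalf
  have hpub := aux_pow_ub k x hx0 hxhalf hkx
  have hxk2 : x ^ k ≤ x ^ 2 := pow_le_pow_of_le_one hx0.le (by linarith) (by omega)
  have hxk0 : (0 : ℝ) ≤ x ^ k := pow_nonneg hx0.le k
  have hN1 : 1 - x ^ k - (1 - x) ^ k ≤ (k : ℝ) * x := by linarith
  have hN2 : (k : ℝ) * x - (k : ℝ) ^ 2 * x ^ 2 - x ^ 2 ≤ 1 - x ^ k - (1 - x) ^ k := by linarith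
  have hN0 : 0 ≤ 1 - x ^ k - (1 - x) ^ k := by
    have h1 : (1 - x) ^ k ≤ (1 - x) ^ 1 :=
      pow_le_pow_of_le_one (by linarith) (by linarith) (by omega)
    have h2 : x ^ k ≤ x ^ 1 := pow_le_pow_of_le_one hx0.le (by linarith) (by omega)
    rw [pow_one] at h1 h2; linarith
  -- denominator
  have hD2 : (2 : ℝ) ^ (k - 1) * 2 = 2 ^ k := by
    rw [← pow_succ]; congr 1; omega
  have hDx : ((2 : ℝ) ^ (k - 1) - 1) * (2 * x) = 1 - 2 * x := by
    linear_combination x * hD2 + hPx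
  have hD0 : (0 : ℝ) < (2 : ℝ) ^ (k - 1) - 1 := by
    have : (2 : ℝ) ^ 1 ≤ 2 ^ (k - 1) := pow_le_pow_right₀ one_le_two (by omega)
    norm_num at this; linarith
  have hcore := core B η₀ η (k : ℝ) (2 ^ k) x ((2 : ℝ) ^ (k - 1) - 1)
    (1 - x ^ k - (1 - x) ^ k) hB hη₀ hη0 hηB hk1 hx0 hxsmall hP hPx hBk hkx hfin hlogx
    hN0 hN1 hN2 hD0 hDx
  have hx2 : x ^ 2 = 1 / 4 ^ k := by
    rw [hxdef, div_pow, one_pow]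
    congr 1
    rw [← pow_mul, show (4:ℝ) = 2^2 by norm_num, ← pow_mul, mul_comm]
  have h2x : (2 : ℝ) / 2 ^ k = 2 * x := by rw [hxdef]; ring
  constructor
  · calc |(-(1 / 2 ^ k : ℝ)) * Real.log (1 / 2 ^ k)
        - (1 - 1 / 2 ^ k) * Real.log (1 - 1 / 2 ^ k)
        + (Real.log 2 / 2 * 2 ^ k - (1 + Real.log 2) / 2 + η) *
          Real.log (1 - (1 - (1 / 2 ^ k : ℝ) ^ k - (1 - 1 / 2 ^ k) ^ k) / (2 ^ (k - 1) - 1))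
        - 1 / 2 ^ k| ≤ (11 + 3 * B) * (k : ℝ) ^ 2 * x ^ 2 := hcore.1
      _ = (11 + 3 * B) * (k : ℝ) ^ 2 / 4 ^ k := by rw [hx2]; ring
  · intro hη₀η
    rw [h2x]
    exact hcore.2 hη₀η

theorem stmt12 (B η₀ : ℝ) (hB : 0 < B) (hη₀ : 0 < η₀) :
    ∃ C > 0, ∃ K₀ : ℕ, ∀ k : ℕ, K₀ ≤ k → ∀ η : ℝ, 0 ≤ η → η ≤ B →
      let r : ℝ := Real.log 2 / 2 * 2 ^ k - (1 + Real.log 2) / 2 + η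
      let x : ℝ := 1 / 2 ^ k
      let ψ : ℝ := -x * Real.log x - (1 - x) * Real.log (1 - x)
        + r * Real.log (1 - (1 - x ^ k - (1 - x) ^ k) / (2 ^ (k - 1) - 1))
      |ψ - 1 / 2 ^ k| ≤ C * k ^ 2 / 4 ^ k ∧
        (η₀ ≤ η → Real.log 2 + r * Real.log (1 - 2 / 2 ^ k) < ψ) := by
  refine ⟨11 + 3 * B, by linarith, ?_⟩
  have htend : Filter.Tendsto
      (fun k : ℕ => (11 + 3 * B) * ((k : ℝ) ^ 2 / 2 ^ k) + (10 + 3 * B) * ((k : ℝ) ^ 0 / 2 ^ k))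
      Filter.atTop (nhds 0) := by
    have a := (tendsto_pow_const_div_const_pow_of_one_lt 2 (by norm_num : (1:ℝ) < 2)).const_mul (11 + 3 * B)
    have b := (tendsto_pow_const_div_const_pow_of_one_lt 0 (by norm_num : (1:ℝ) < 2)).const_mul (10 + 3 * B)
    simpa using a.add b
  have hev := htend.eventually_lt_const (by linarith : (0:ℝ) < 2 * η₀)
  obtain ⟨K₁, hK₁⟩ := Filter.eventually_atTop.mp hev
  obtain ⟨M, hM⟩ := exists_nat_ge ((B + 2) * 10)
  refine ⟨max (max K₁ 10) M, ?_⟩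
  intro k hk η hη0 hηB
  have hk10 : 10 ≤ k := le_trans (le_trans (le_max_right _ _) (le_max_left _ _)) hk
  have hkM : M ≤ k := le_trans (le_max_right _ _) hk
  have hkK₁ : K₁ ≤ k := le_trans (le_trans (le_max_left _ _) (le_max_left _ _)) hk
  have hBk : (B + 2) * 10 ≤ 2 ^ k := by
    calc (B + 2) * 10 ≤ (M : ℝ) := hM
      _ ≤ (k : ℝ) := by exact_mod_cast hkM
      _ ≤ 2 ^ k := by exact_mod_cast (Nat.lt_two_pow_self (n := k)).le
  have hfin : (11 + 3 * B) * (k : ℝ) ^ 2 + (10 + 3 * B) < 2 * η₀ * 2 ^ k := by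
    have h := hK₁ k hkK₁
    have hp : (0 : ℝ) < 2 ^ k := by positivity
    rw [pow_zero] at h
    have h2 := mul_lt_mul_of_pos_right h hp
    calc (11 + 3 * B) * (k : ℝ) ^ 2 + (10 + 3 * B)
        = ((11 + 3 * B) * ((k : ℝ) ^ 2 / 2 ^ k) + (10 + 3 * B) * (1 / 2 ^ k)) * 2 ^ k := by
          field_simp
      _ < 2 * η₀ * 2 ^ k := h2
  exact stmt12_helper B η₀ hB hη₀ k hk10 hBk hfin η hη0 hηB
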